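/- Let f : ℍ → ℍ be three times continuously real-differentiable on an open set U ⊆ ℍ containing q₀. Then, as λ → 0, the remainder λ ↦ f(q₀ + λ) − f(q₀) − Σ_{η ∈ {1,i,j,k}} (∂f/∂q^η)(q₀)·λ^η − (1/2) Σ_{η,ζ ∈ {1,i,j,k}} (∂²f/∂q^ζ∂q^η)(q₀)·λ^ζ·λ^η is big-O of |λ|³, where λ^η := η λ η⁻¹ and (∂²f/∂q^ζ∂q^η)(q₀) is the left HR derivative with respect to ζ, taken at q₀, of the function q ↦ (∂f/∂q^η)(q). -/

import Mathlib

open Quaternion Filter Topology Asymptotics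

noncomputable section

/-- The imaginary unit `i` of the real quaternions. -/
def qI : ℍ[ℝ] := ⟨0, 1, 0, 0⟩
/-- The imaginary unit `j` of the real quaternions. -/
def qJ : ℍ[ℝ] := ⟨0, 0, 1, 0⟩
/-- The imaginary unit `k` of the real quaternions. -/
def qK : ℍ[ℝ] := ⟨0, 0, 0, 1⟩

/-- Quaternion rotation `p ↦ μ p μ⁻¹`. -/
def qRot (μ p : ℍ[ℝ]) : ℍ[ℝ] := μ * p * μ⁻¹

/-- The left GHR derivative `∂f/∂q^μ` at `q`. -/
def lD (f : ℍ[ℝ] → ℍ[ℝ]) (μ q : ℍ[ℝ]) : ℍ[ℝ] :=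
  (4 : ℍ[ℝ])⁻¹ * (fderiv ℝ f q 1 - fderiv ℝ f q qI * qRot μ qI
    - fderiv ℝ f q qJ * qRot μ qJ - fderiv ℝ f q qK * qRot μ qK)

/-- The left conjugate GHR derivative `∂f/∂q^{μ*}` at `q`. -/
def lDc (f : ℍ[ℝ] → ℍ[ℝ]) (μ q : ℍ[ℝ]) : ℍ[ℝ] :=
  (4 : ℍ[ℝ])⁻¹ * (fderiv ℝ f q 1 + fderiv ℝ f q qI * qRot μ qI
    + fderiv ℝ f q qJ * qRot μ qJ + fderiv ℝ f q qK * qRot μ qK)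

/-- The right GHR derivative `∂ᵣf/∂q^μ` at `q`. -/
def rD (f : ℍ[ℝ] → ℍ[ℝ]) (μ q : ℍ[ℝ]) : ℍ[ℝ] :=
  (4 : ℍ[ℝ])⁻¹ * (fderiv ℝ f q 1 - qRot μ qI * fderiv ℝ f q qI
    - qRot μ qJ * fderiv ℝ f q qJ - qRot μ qK * fderiv ℝ f q qK)

/-- The right conjugate GHR derivative `∂ᵣf/∂q^{μ*}` at `q`. -/
def rDc (f : ℍ[ℝ] → ℍ[ℝ]) (μ q : ℍ[ℝ]) : ℍ[ℝ] :=
  (4 : ℍ[ℝ])⁻¹ * (fderiv ℝ f q 1 + qRot μ qI * fderiv ℝ f q qI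
    + qRot μ qJ * fderiv ℝ f q qJ + qRot μ qK * fderiv ℝ f q qK)

/-! ### Auxiliary algebraic lemmas -/

lemma qI_inv : qI⁻¹ = -qI := by
  apply inv_eq_of_mul_eq_one_right
  ext <;> simp only [Quaternion.re_mul, Quaternion.imI_mul, Quaternion.imJ_mul, Quaternion.imK_mul, Quaternion.re_neg, Quaternion.imI_neg, Quaternion.imJ_neg, Quaternion.imK_neg] <;> simp [qI]

lemma qJ_inv : qJ⁻¹ = -qJ := by
  apply inv_eq_of_mul_eq_one_right
  ext <;> simp only [Quaternion.re_mul, Quaternion.imI_mul, Quaternion.imJ_mul, Quaternion.imK_mul, Quaternion.re_neg, Quaternion.imI_neg, Quaternion.imJ_neg, Quaternion.imK_neg] <;> simp [qJ]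

lemma qK_inv : qK⁻¹ = -qK := by
  apply inv_eq_of_mul_eq_one_right
  ext <;> simp only [Quaternion.re_mul, Quaternion.imI_mul, Quaternion.imJ_mul, Quaternion.imK_mul, Quaternion.re_neg, Quaternion.imI_neg, Quaternion.imJ_neg, Quaternion.imK_neg] <;> simp [qK]

lemma four_inv_mul (x : ℍ[ℝ]) : (4:ℍ[ℝ])⁻¹ * x = (4⁻¹ : ℝ) • x := by
  have h4 : (4:ℍ[ℝ]) = ((4:ℝ) : ℍ[ℝ]) := by norm_cast
  rw [h4, ← Quaternion.coe_inv, Quaternion.coe_mul_eq_smul]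

lemma two_inv_mul (x : ℍ[ℝ]) : (2:ℍ[ℝ])⁻¹ * x = (2⁻¹ : ℝ) • x := by
  have h2 : (2:ℍ[ℝ]) = ((2:ℝ) : ℍ[ℝ]) := by norm_cast
  rw [h2, ← Quaternion.coe_inv, Quaternion.coe_mul_eq_smul]

set_option maxHeartbeats 2000000 in
lemma key (A B C D l : ℍ[ℝ]) :
    ([1,qI,qJ,qK].map fun η =>
        (4:ℍ[ℝ])⁻¹ * (A - B * qRot η qI - C * qRot η qJ - D * qRot η qK) * qRot η l).sum
      = l.re • A + l.imI • B + l.imJ • C + l.imK • D := by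
  simp only [List.map_cons, List.map_nil, List.sum_cons, List.sum_nil, add_zero, qRot,
    qI_inv, qJ_inv, qK_inv, inv_one, mul_assoc, four_inv_mul]
  ext <;>
    simp only [Quaternion.re_add, Quaternion.imI_add, Quaternion.imJ_add, Quaternion.imK_add,
      Quaternion.re_sub, Quaternion.imI_sub, Quaternion.imJ_sub, Quaternion.imK_sub,
      Quaternion.re_neg, Quaternion.imI_neg, Quaternion.imJ_neg, Quaternion.imK_neg,
      Quaternion.re_mul, Quaternion.imI_mul, Quaternion.imJ_mul, Quaternion.imK_mul,
      Quaternion.re_smul, Quaternion.imI_smul, Quaternion.imJ_smul, Quaternion.imK_smul,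
      Quaternion.re_one, Quaternion.imI_one, Quaternion.imJ_one, Quaternion.imK_one,
      smul_eq_mul] <;> simp only [qI, qJ, qK] <;>
    ring

lemma key' (A B C D l r : ℍ[ℝ]) :
    ([1,qI,qJ,qK].map fun ζ =>
        (4:ℍ[ℝ])⁻¹ * (A - B * qRot ζ qI - C * qRot ζ qJ - D * qRot ζ qK) * qRot ζ l * r).sum
      = (l.re • A + l.imI • B + l.imJ • C + l.imK • D) * r := by
  have h := key A B C D l
  simp only [List.map_cons, List.map_nil, List.sum_cons, List.sum_nil, add_zero] at h ⊢
  rw [← h]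
  simp only [add_mul]

lemma quat_decomp (l : ℍ[ℝ]) : l = l.re • (1:ℍ[ℝ]) + l.imI • qI + l.imJ • qJ + l.imK • qK := by
  ext <;> simp [Quaternion.re_smul] <;> simp [qI, qJ, qK]

lemma clm_basis (T : ℍ[ℝ] →L[ℝ] ℍ[ℝ]) (l : ℍ[ℝ]) :
    T l = l.re • T 1 + l.imI • T qI + l.imJ • T qJ + l.imK • T qK := by
  conv_lhs => rw [quat_decomp l]
  simp

lemma sum_lD_eq (g : ℍ[ℝ] → ℍ[ℝ]) (q l : ℍ[ℝ]) :
    ([1,qI,qJ,qK].map fun η => lD g η q * qRot η l).sum = fderiv ℝ g q l := by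
  simp only [lD]
  rw [key]
  exact (clm_basis _ l).symm

lemma sum_lD_eq' (g : ℍ[ℝ] → ℍ[ℝ]) (q l r : ℍ[ℝ]) :
    ([1,qI,qJ,qK].map fun ζ => lD g ζ q * qRot ζ l * r).sum = fderiv ℝ g q l * r := by
  simp only [lD]
  rw [key']
  rw [← clm_basis]

instance (priority := low) quatNormedSpaceAux : NormedSpace ℝ ℍ[ℝ] := InnerProductSpace.toNormedSpace

set_option maxHeartbeats 4000000 in
theorem taylor_theorem_left_form
    (f : ℍ[ℝ] → ℍ[ℝ]) (U : Set ℍ[ℝ]) (hU : IsOpen U) (q₀ : ℍ[ℝ]) (hq₀ : q₀ ∈ U)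
    (hf : ContDiffOn ℝ 3 f U) :
    (fun l : ℍ[ℝ] => f (q₀ + l) - f q₀
        - (([1, qI, qJ, qK].map fun η => lD f η q₀ * qRot η l).sum)
        - (2 : ℍ[ℝ])⁻¹ * (([1, qI, qJ, qK].map fun η =>
            (([1, qI, qJ, qK].map fun ζ =>
              lD (fun p => lD f η p) ζ q₀ * qRot ζ l * qRot η l).sum)).sum))
      =O[𝓝 0] fun l : ℍ[ℝ] => ‖l‖ ^ 3 := by
  have hmem : U ∈ 𝓝 q₀ := hU.mem_nhds hq₀
  set f' : ℍ[ℝ] → (ℍ[ℝ] →L[ℝ] ℍ[ℝ]) := fderiv ℝ f with hf'def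
  have hf'U : ContDiffOn ℝ 2 f' U := hf.fderiv_of_isOpen hU (by norm_num)
  have hd1 : ∀ x ∈ U, HasFDerivAt f (f' x) x := fun x hx =>
    ((hf.contDiffAt (hU.mem_nhds hx)).differentiableAt (by norm_num)).hasFDerivAt
  have hd2 : ∀ x ∈ U, HasFDerivAt f' (fderiv ℝ f' x) x := fun x hx =>
    ((hf'U.contDiffAt (hU.mem_nhds hx)).differentiableAt (by norm_num)).hasFDerivAt
  set f'' : ℍ[ℝ] →L[ℝ] (ℍ[ℝ] →L[ℝ] ℍ[ℝ]) := fderiv ℝ f' q₀ with hf''def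
  have hsymm : ∀ v w, f'' v w = f'' w v := fun v w =>
    second_derivative_symmetric_of_eventually (Filter.eventually_of_mem hmem hd1)
      (hd2 q₀ hq₀) v w
  -- the derivative of `p ↦ f' p a`
  have hTa : ∀ a : ℍ[ℝ], HasFDerivAt (fun p => f' p a)
      ((ContinuousLinearMap.apply ℝ ℍ[ℝ] a).comp f'') q₀ := fun a =>
    (ContinuousLinearMap.apply ℝ ℍ[ℝ] a).hasFDerivAt.comp q₀ (hd2 q₀ hq₀)
  -- the derivative of `p ↦ lD f η p` at `q₀`
  have hgη : ∀ η l : ℍ[ℝ], fderiv ℝ (fun p => lD f η p) q₀ l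
      = (4:ℍ[ℝ])⁻¹ * (f'' l 1 - f'' l qI * qRot η qI
          - f'' l qJ * qRot η qJ - f'' l qK * qRot η qK) := by
    intro η l
    have hfun : (fun p => lD f η p) = (fun p => (4:ℍ[ℝ])⁻¹ *
        (f' p 1 - f' p qI * qRot η qI - f' p qJ * qRot η qJ - f' p qK * qRot η qK)) := rfl
    have hD := ((((hTa 1).sub ((hTa qI).mul_const' (qRot η qI))).sub
        ((hTa qJ).mul_const' (qRot η qJ))).sub
        ((hTa qK).mul_const' (qRot η qK))).const_mul ((4:ℍ[ℝ])⁻¹)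
    rw [hfun]
    erw [hD.fderiv]
    simp only [ContinuousLinearMap.smul_apply, ContinuousLinearMap.sub_apply,
      ContinuousLinearMap.smulRight_apply, ContinuousLinearMap.coe_comp',
      Function.comp_apply, ContinuousLinearMap.apply_apply, smul_eq_mul, op_smul_eq_mul]
  -- the second-order sum
  have hS : ∀ l : ℍ[ℝ], ([1,qI,qJ,qK].map fun η =>
      (([1,qI,qJ,qK].map fun ζ =>
        lD (fun p => lD f η p) ζ q₀ * qRot ζ l * qRot η l).sum)).sum = f'' l l := by
    intro l
    have inner : ∀ η : ℍ[ℝ], ([1,qI,qJ,qK].map fun ζ =>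
        lD (fun p => lD f η p) ζ q₀ * qRot ζ l * qRot η l).sum
        = fderiv ℝ (fun p => lD f η p) q₀ l * qRot η l := fun η =>
      sum_lD_eq' (fun p => lD f η p) q₀ l (qRot η l)
    simp only [inner, hgη]
    rw [key]
    exact (clm_basis (f'' l) l).symm
  -- rewrite the function under consideration
  have hfun : (fun l : ℍ[ℝ] => f (q₀ + l) - f q₀
        - (([1, qI, qJ, qK].map fun η => lD f η q₀ * qRot η l).sum)
        - (2 : ℍ[ℝ])⁻¹ * (([1, qI, qJ, qK].map fun η =>
            (([1, qI, qJ, qK].map fun ζ =>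
              lD (fun p => lD f η p) ζ q₀ * qRot ζ l * qRot η l).sum)).sum))
      = fun l : ℍ[ℝ] => f (q₀ + l) - f q₀ - f' q₀ l - (2⁻¹:ℝ) • (f'' l l) := by
    funext l
    rw [sum_lD_eq f q₀ l, hS l, two_inv_mul]
  rw [hfun]
  -- now the analytic estimate
  have hC2 : ContDiffAt ℝ 2 f' q₀ :=
    (hf.contDiffAt hmem).fderiv_right (m := 2) (by norm_num)
  have hC1 : ContDiffAt ℝ 1 (fderiv ℝ f') q₀ :=
    hC2.fderiv_right (m := 1) (by norm_num)
  obtain ⟨K, t, ht, hlip⟩ := hC1.exists_lipschitzOnWith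
  obtain ⟨ε, hε, hball⟩ : ∃ ε > 0, Metric.closedBall q₀ ε ⊆ U ∩ t := by
    have h' : U ∩ t ∈ 𝓝 q₀ := Filter.inter_mem hmem ht
    rcases Metric.nhds_basis_closedBall.mem_iff.mp h' with ⟨ε, hε, h⟩
    exact ⟨ε, hε, h⟩
  rw [Asymptotics.isBigO_iff]
  refine ⟨K, ?_⟩
  filter_upwards [Metric.closedBall_mem_nhds (0:ℍ[ℝ]) hε] with l hl
  have hlε : ‖l‖ ≤ ε := by simpa [mem_closedBall_zero_iff] using hl
  set s : Set ℍ[ℝ] := Metric.closedBall (0:ℍ[ℝ]) ‖l‖ with hs_def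
  have hsub : ∀ h ∈ s, q₀ + h ∈ U ∩ t := by
    intro h hh
    apply hball
    rw [Metric.mem_closedBall] at hh ⊢
    have : dist (q₀ + h) q₀ = ‖h‖ := by simp [dist_eq_norm]
    rw [this]
    exact le_trans (by simpa [dist_eq_norm] using hh) hlε
  have h0s : (0:ℍ[ℝ]) ∈ s := by simp [hs_def]
  have hls : l ∈ s := by simp [hs_def]
  -- Step A : bound for the first-order remainder of f'
  have hF : ∀ h ∈ s, HasFDerivWithinAt (fun h => f' (q₀ + h) - f'' h)
      (fderiv ℝ f' (q₀ + h) - f'') s h := by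
    intro h hh
    have h1 : HasFDerivAt (fun y => f' (q₀ + y)) (fderiv ℝ f' (q₀ + h)) h := by
      have := (hd2 (q₀ + h) (hsub h hh).1).comp h ((hasFDerivAt_id h).const_add q₀)
      exact this
    exact (h1.sub f''.hasFDerivAt).hasFDerivWithinAt
  have hFb : ∀ h ∈ s, ‖fderiv ℝ f' (q₀ + h) - f''‖ ≤ (K:ℝ) * ‖l‖ := by
    intro h hh
    have hmemt : q₀ + h ∈ t := (hsub h hh).2
    have hq0t : q₀ ∈ t := (hball (Metric.mem_closedBall_self hε.le)).2
    have := hlip.dist_le_mul (q₀ + h) hmemt q₀ hq0t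
    rw [dist_eq_norm] at this
    have hd : dist (q₀ + h) q₀ = ‖h‖ := by simp [dist_eq_norm]
    rw [hd] at this
    refine le_trans this ?_
    have hh' : ‖h‖ ≤ ‖l‖ := by simpa [hs_def, mem_closedBall_zero_iff] using hh
    exact mul_le_mul_of_nonneg_left hh' K.2
  have stepA : ∀ h ∈ s, ‖f' (q₀ + h) - f' q₀ - f'' h‖ ≤ ((K:ℝ) * ‖l‖) * ‖h‖ := by
    intro h hh
    have := Convex.norm_image_sub_le_of_norm_hasFDerivWithin_le hF hFb
      (convex_closedBall _ _) h0s hh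
    simpa [sub_right_comm] using this
  -- Step B : the second-order remainder
  set R : ℍ[ℝ] → ℍ[ℝ] :=
    fun h => f (q₀ + h) - f q₀ - f' q₀ h - (2⁻¹:ℝ) • (f'' h h) with hRdef
  have hR : ∀ h ∈ s, HasFDerivWithinAt R (f' (q₀ + h) - f' q₀ - f'' h) s h := by
    intro h hh
    have h1 : HasFDerivAt (fun y => f (q₀ + y)) (f' (q₀ + h)) h := by
      have := (hd1 (q₀ + h) (hsub h hh).1).comp h ((hasFDerivAt_id h).const_add q₀)
      exact this
    have hb : IsBoundedBilinearMap ℝ fun p : (ℍ[ℝ] →L[ℝ] ℍ[ℝ]) × ℍ[ℝ] => p.1 p.2 :=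
      isBoundedBilinearMap_apply
    have hin : HasFDerivAt (fun y : ℍ[ℝ] => ((f'' y, y) : (ℍ[ℝ] →L[ℝ] ℍ[ℝ]) × ℍ[ℝ]))
        (f''.prod (ContinuousLinearMap.id ℝ ℍ[ℝ])) h :=
      HasFDerivAt.prodMk f''.hasFDerivAt (hasFDerivAt_id h)
    have h2 : HasFDerivAt (fun y : ℍ[ℝ] => f'' y y)
        ((hb.deriv (f'' h, h)).comp (f''.prod (ContinuousLinearMap.id ℝ ℍ[ℝ]))) h :=
      HasFDerivAt.comp (f := fun y : ℍ[ℝ] => ((f'' y, y) : (ℍ[ℝ] →L[ℝ] ℍ[ℝ]) × ℍ[ℝ]))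
        h (hb.hasFDerivAt (f'' h, h)) hin
    have h3 := ((h1.sub_const (f q₀)).sub (f' q₀).hasFDerivAt).sub (h2.const_smul (2⁻¹:ℝ))
    have heq : f' (q₀ + h) - f' q₀ -
        (2⁻¹:ℝ) • ((hb.deriv (f'' h, h)).comp
          (f''.prod (ContinuousLinearMap.id ℝ ℍ[ℝ])))
        = f' (q₀ + h) - f' q₀ - f'' h := by
      refine ContinuousLinearMap.ext fun v => ?_
      simp only [ContinuousLinearMap.sub_apply, ContinuousLinearMap.smul_apply,
        ContinuousLinearMap.coe_comp', Function.comp_apply,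
        ContinuousLinearMap.prod_apply, ContinuousLinearMap.coe_id', id_eq,
        IsBoundedBilinearMap.deriv_apply]
      rw [hsymm v h]
      congr 1
      rw [← two_smul ℝ (f'' h v), smul_smul]
      norm_num
    rw [← heq]
    exact h3.hasFDerivWithinAt
  have hRb : ∀ h ∈ s, ‖f' (q₀ + h) - f' q₀ - f'' h‖ ≤ (K:ℝ) * ‖l‖ * ‖l‖ := by
    intro h hh
    refine le_trans (stepA h hh) ?_
    have hh' : ‖h‖ ≤ ‖l‖ := by simpa [hs_def, mem_closedBall_zero_iff] using hh
    exact mul_le_mul_of_nonneg_left hh' (by positivity)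
  have hfin := Convex.norm_image_sub_le_of_norm_hasFDerivWithin_le hR hRb
    (convex_closedBall _ _) h0s hls
  have hR0 : R 0 = 0 := by simp [hRdef]
  rw [hR0, sub_zero, sub_zero] at hfin
  show ‖R l‖ ≤ (K:ℝ) * ‖‖l‖ ^ 3‖
  calc ‖R l‖ ≤ (K:ℝ) * ‖l‖ * ‖l‖ * ‖l‖ := hfin
    _ = (K:ℝ) * ‖l‖ ^ 3 := by ring
    _ ≤ (K:ℝ) * ‖‖l‖ ^ 3‖ := by
        rw [Real.norm_of_nonneg (by positivity)]

end
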